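/- Let P be the simple polytope represented on a regular (2k+1)-gon with assigned positive integers [a_1,…,a_{2k+1}] summing to n+3. Then β^{-1,2j}(P) equals the number of indices i ∈ {1,…,2k+1} such that a_i + a_{i+1} + ⋯ + a_{i+k-1} = j, where indices are taken modulo 2k+1. -/

import Mathlib

noncomputable section

open scoped Classical

/-- The `i`-th vertex of the regular `(2k+1)`-gon centered at the origin of `ℝ²`. -/
def gonPt (k : ℕ) (i : Fin (2 * k + 1)) : ℝ × ℝ :=
  (Real.cos (2 * Real.pi * i / (2 * k + 1)), Real.sin (2 * Real.pi * i / (2 * k + 1)))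

/-- The facets of the polytope given by the Gale diagram assigning `a i` facets
to the `i`-th vertex of the regular `(2k+1)`-gon. -/
abbrev GaleFacet (k : ℕ) (a : ℕ → ℕ) := Σ i : Fin (2 * k + 1), Fin (a i.val)

/-- `S` is a non-face of the simplicial complex of the Gale diagram: the origin
is not in the convex hull of the points assigned to the complementary facets. -/
def GaleNonface (k : ℕ) (a : ℕ → ℕ) (S : Finset (GaleFacet k a)) : Prop :=
  (0 : ℝ × ℝ) ∉ convexHull ℝ ((fun x : GaleFacet k a => gonPt k x.1) '' {x | x ∉ S})

/-- `S` is a minimal non-face: it is a non-face and no proper subset is. -/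
def GaleMinNonface (k : ℕ) (a : ℕ → ℕ) (S : Finset (GaleFacet k a)) : Prop :=
  GaleNonface k a S ∧ ∀ T ⊂ S, ¬ GaleNonface k a T

/-- `β^{-1,2j}` of the polytope of the Gale diagram: the number of monomials of
degree `2j` in a minimal generating set of its Stanley–Reisner ideal, i.e. the
number of minimal non-faces of cardinality `j`. -/
def galeBetti1 (k : ℕ) (a : ℕ → ℕ) (j : ℕ) : ℕ :=
  {S : Finset (GaleFacet k a) | GaleMinNonface k a S ∧ S.card = j}.ncard

namespace Stmt15Aux

/-- Arc of `k` consecutive vertices starting at `i`. -/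
def arcV (k i : ℕ) : Finset (Fin (2 * k + 1)) :=
  (Finset.range k).image (fun t => ⟨(i + t) % (2 * k + 1), Nat.mod_lt _ (by omega)⟩)

def arcF (k : ℕ) (a : ℕ → ℕ) (i : ℕ) : Finset (GaleFacet k a) :=
  (arcV k i).sigma (fun _ => Finset.univ)

lemma mem_arcV {k i : ℕ} {v : Fin (2 * k + 1)} :
    v ∈ arcV k i ↔ ∃ t < k, (v : ℕ) = (i + t) % (2 * k + 1) := by
  simp only [arcV, Finset.mem_image, Finset.mem_range, Fin.ext_iff]
  constructor
  · rintro ⟨t, ht, h⟩; exact ⟨t, ht, h.symm⟩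
  · rintro ⟨t, ht, h⟩; exact ⟨t, ht, h.symm⟩

lemma mem_arcF {k : ℕ} {a : ℕ → ℕ} {i : ℕ} {x : GaleFacet k a} :
    x ∈ arcF k a i ↔ x.1 ∈ arcV k i := by
  simp [arcF, Finset.mem_sigma]

lemma arc_inj {k i : ℕ} {t t' : ℕ} (ht : t < k) (ht' : t' < k)
    (h : (i + t) % (2 * k + 1) = (i + t') % (2 * k + 1)) : t = t' := by
  have h2 : t ≡ t' [MOD 2 * k + 1] := Nat.ModEq.add_left_cancel' i h
  have := h2.eq_of_lt_of_lt (by omega) (by omega)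
  exact this

lemma card_arcV {k i : ℕ} : (arcV k i).card = k := by
  rw [arcV, Finset.card_image_of_injOn, Finset.card_range]
  intro t ht t' ht' h
  simp only [Finset.mem_coe, Finset.mem_range] at ht ht'
  exact arc_inj ht ht' (by simpa [Fin.ext_iff] using h)

lemma card_arcF {k : ℕ} {a : ℕ → ℕ} {i : ℕ} :
    (arcF k a i).card = ∑ t ∈ Finset.range k, a ((i + t) % (2 * k + 1)) := by
  rw [arcF, Finset.card_sigma, arcV, Finset.sum_image]
  · simp
  · intro t ht t' ht' h
    simp only [Finset.mem_coe, Finset.mem_range] at ht ht'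
    exact arc_inj ht ht' (by simpa [Fin.ext_iff] using h)

lemma exists_arc_index (k i : ℕ) (v : ℕ) (hv : v < 2 * k + 1) :
    ∃ s < 2 * k + 1, v = (i + s) % (2 * k + 1) := by
  set N := 2 * k + 1 with hN
  have hN0 : 0 < N := by omega
  have hr : i % N < N := Nat.mod_lt _ hN0
  refine ⟨(v + (N - i % N)) % N, Nat.mod_lt _ hN0, ?_⟩
  rw [Nat.add_mod_mod]
  have hdm : N * (i / N) + i % N = i := Nat.div_add_mod i N
  have h3 : i + (v + (N - i % N)) = v + N + N * (i / N) := by omega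
  rw [h3, Nat.add_mul_mod_self_left, Nat.add_mod_right, Nat.mod_eq_of_lt hv]

lemma index_eq_of_arcV_eq {k i i' : ℕ} (hi : i < 2 * k + 1) (hi' : i' < 2 * k + 1)
    (hk : 1 ≤ k) (h : arcV k i = arcV k i') : i = i' := by
  have h1 : (⟨i, hi⟩ : Fin (2 * k + 1)) ∈ arcV k i :=
    mem_arcV.mpr ⟨0, hk, by simp [Nat.mod_eq_of_lt hi]⟩
  have h2 : (⟨i', hi'⟩ : Fin (2 * k + 1)) ∈ arcV k i' :=
    mem_arcV.mpr ⟨0, hk, by simp [Nat.mod_eq_of_lt hi']⟩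
  rw [h] at h1
  rw [← h] at h2
  obtain ⟨d, hd, hd2⟩ := mem_arcV.mp h1
  obtain ⟨d', hd', hd2'⟩ := mem_arcV.mp h2
  simp only at hd2 hd2'
  have m1 : i' + d ≡ i [MOD 2 * k + 1] := by
    show (i' + d) % (2 * k + 1) = i % (2 * k + 1)
    rw [Nat.mod_eq_of_lt hi]; exact hd2.symm
  have m2 : i + d' ≡ i' [MOD 2 * k + 1] := by
    show (i + d') % (2 * k + 1) = i' % (2 * k + 1)
    rw [Nat.mod_eq_of_lt hi']; exact hd2'.symm
  have m3 : i + (d' + d) ≡ i + 0 [MOD 2 * k + 1] := by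
    have : i + (d' + d) = i + d' + d := by omega
    rw [this, Nat.add_zero]
    exact (m2.add_right d).trans m1
  have m4 : d' + d ≡ 0 [MOD 2 * k + 1] := Nat.ModEq.add_left_cancel' i m3
  have hdvd : (2 * k + 1) ∣ (d' + d) := (Nat.modEq_zero_iff_dvd).mp m4
  have hz : d' + d = 0 := Nat.eq_zero_of_dvd_of_lt hdvd (by omega)
  have hd0 : d = 0 := by omega
  rw [hd2, hd0, Nat.add_zero, Nat.mod_eq_of_lt hi']


lemma not_mem_hull (k : ℕ) (i : ℕ) (W : Set (Fin (2 * k + 1)))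
    (hW : ∀ v ∈ W, ∃ s, k ≤ s ∧ s ≤ 2 * k ∧ (v : ℕ) = (i + s) % (2 * k + 1)) :
    (0 : ℝ × ℝ) ∉ convexHull ℝ (gonPt k '' W) := by
  have hπ := Real.pi_pos
  have hN0 : (0 : ℝ) < 2 * (k : ℝ) + 1 := by positivity
  set θ : ℝ := Real.pi * (2 * i + 3 * k) / (2 * (k : ℝ) + 1) with hθ
  set f : ℝ × ℝ → ℝ := fun p => Real.cos θ * p.1 + Real.sin θ * p.2 with hf
  have hlin : IsLinearMap ℝ f := by
    constructor
    · intro p q; simp only [hf, Prod.fst_add, Prod.snd_add]; ring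
    · intro c p
      simp only [hf, Prod.smul_fst, Prod.smul_snd, smul_eq_mul]
      ring
  have hconv : Convex ℝ {p : ℝ × ℝ | 0 < f p} := convex_halfSpace_gt hlin 0
  have hsub : gonPt k '' W ⊆ {p : ℝ × ℝ | 0 < f p} := by
    rintro _ ⟨v, hv, rfl⟩
    obtain ⟨s, hs1, hs2, hveq⟩ := hW v hv
    have hdm : (2 * k + 1) * ((i + s) / (2 * k + 1)) + (i + s) % (2 * k + 1) = i + s :=
      Nat.div_add_mod _ _
    set q : ℕ := (i + s) / (2 * k + 1) with hq
    have hvr : ((v : ℕ) : ℝ) = (i : ℝ) + s - (2 * (k : ℝ) + 1) * q := by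
      rw [hveq]
      have hc := congrArg (Nat.cast : ℕ → ℝ) hdm
      push_cast at hc
      linarith
    have key : f (gonPt k v) =
        Real.cos (2 * Real.pi * ((v : ℕ) : ℝ) / (2 * (k : ℝ) + 1) - θ) := by
      simp only [hf, gonPt]
      rw [Real.cos_sub]
      ring
    have hx : 2 * Real.pi * ((v : ℕ) : ℝ) / (2 * (k : ℝ) + 1) - θ
        = Real.pi * (2 * (s : ℝ) - 3 * k) / (2 * (k : ℝ) + 1)
          + ((-(q : ℤ) : ℤ) : ℝ) * (2 * Real.pi) := by
      rw [hvr, hθ]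
      push_cast
      field_simp
      ring
    have hcos : 0 < Real.cos (2 * Real.pi * ((v : ℕ) : ℝ) / (2 * (k : ℝ) + 1) - θ) := by
      rw [hx, Real.cos_add_int_mul_two_pi]
      apply Real.cos_pos_of_mem_Ioo
      have h1 : (k : ℝ) ≤ (s : ℝ) := by exact_mod_cast hs1
      have h2 : (s : ℝ) ≤ 2 * (k : ℝ) := by exact_mod_cast hs2
      constructor
      · rw [lt_div_iff₀ hN0]
        nlinarith [mul_nonneg hπ.le (by linarith : (0:ℝ) ≤ (s : ℝ) - k)]
      · rw [div_lt_iff₀ hN0]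
        nlinarith [mul_nonneg hπ.le (by linarith : (0:ℝ) ≤ 2 * (k : ℝ) - s)]
    rw [Set.mem_setOf_eq, key]
    exact hcos
  intro h0
  have := convexHull_min hsub hconv h0
  simp only [Set.mem_setOf_eq, hf] at this
  norm_num at this


lemma exists_arc_of_not_mem_hull (k : ℕ) (hk : 1 ≤ k) (W : Set (Fin (2 * k + 1)))
    (h0 : (0 : ℝ × ℝ) ∉ convexHull ℝ (gonPt k '' W)) :
    ∃ i < 2 * k + 1, ∀ t < k, ∀ v ∈ W, (v : ℕ) ≠ (i + t) % (2 * k + 1) := by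
  by_cases hWe : W = ∅
  · exact ⟨0, by omega, fun t _ v hv => absurd hv (by simp [hWe])⟩
  have hπ := Real.pi_pos
  have hN0 : (0 : ℝ) < 2 * (k : ℝ) + 1 := by positivity
  -- separating functional
  obtain ⟨f, u, hu0, hub⟩ := geometric_hahn_banach_point_closed
    (convex_convexHull ℝ (gonPt k '' W))
    ((W.toFinite.image _).isClosed_convexHull (𝕜 := ℝ)) h0
  rw [map_zero] at hu0
  set c1 : ℝ := f (1, 0) with hc1
  set c2 : ℝ := f (0, 1) with hc2
  have hfp : ∀ p : ℝ × ℝ, f p = p.1 * c1 + p.2 * c2 := by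
    intro p
    have hps : p = p.1 • ((1 : ℝ), (0 : ℝ)) + p.2 • ((0 : ℝ), (1 : ℝ)) := by
      ext <;> simp
    conv_lhs => rw [hps]
    rw [map_add, map_smul, map_smul]
    simp [smul_eq_mul, hc1, hc2]
  have key : ∀ v ∈ W, 0 < Real.cos (2 * Real.pi * ((v : ℕ) : ℝ) / (2 * (k : ℝ) + 1)) * c1
      + Real.sin (2 * Real.pi * ((v : ℕ) : ℝ) / (2 * (k : ℝ) + 1)) * c2 := by
    intro v hv
    have h1 : u < f (gonPt k v) := hub _ (subset_convexHull ℝ _ (Set.mem_image_of_mem _ hv))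
    rw [hfp] at h1
    simp only [gonPt] at h1
    linarith
  -- polar coordinates for (c1, c2)
  set z : ℂ := Complex.mk c1 c2 with hz
  have hzne : z ≠ 0 := by
    intro hz0
    obtain ⟨v0, hv0⟩ := Set.nonempty_iff_ne_empty.mpr hWe
    have := key v0 hv0
    have e1 : c1 = 0 := by
      have := congrArg Complex.re hz0; simpa [hz] using this
    have e2 : c2 = 0 := by
      have := congrArg Complex.im hz0; simpa [hz] using this
    rw [e1, e2] at this; simp at this
  set r : ℝ := ‖z‖ with hr
  have hrpos : 0 < r := by
    rw [hr]; exact (norm_pos_iff.mpr hzne)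
  set θ : ℝ := Complex.arg z with hθ
  have hcθ : r * Real.cos θ = c1 := by
    rw [hθ, Complex.cos_arg hzne, hr]
    field_simp
    rfl
  have hsθ : r * Real.sin θ = c2 := by
    rw [hθ, Complex.sin_arg, hr]
    field_simp
    rfl
  have key2 : ∀ v ∈ W,
      0 < Real.cos (2 * Real.pi * ((v : ℕ) : ℝ) / (2 * (k : ℝ) + 1) - θ) := by
    intro v hv
    have h1 := key v hv
    rw [← hcθ, ← hsθ] at h1
    have h2 : 0 < r * Real.cos (2 * Real.pi * ((v : ℕ) : ℝ) / (2 * (k : ℝ) + 1) - θ) := by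
      rw [Real.cos_sub]; ring_nf; ring_nf at h1; linarith
    by_contra hcc
    push_neg at hcc
    nlinarith
  -- choose the arc via the ceiling of A
  set A : ℝ := (2 * (k : ℝ) + 1) * (θ + Real.pi / 2) / (2 * Real.pi) with hA
  set m0 : ℤ := ⌈A⌉ with hm0
  have hNZ : (0 : ℤ) < (2 * k + 1 : ℕ) := by positivity
  refine ⟨(m0 % (2 * k + 1 : ℕ)).toNat, ?_, ?_⟩
  · have h1 : m0 % (2 * k + 1 : ℕ) < (2 * k + 1 : ℕ) := Int.emod_lt_of_pos m0 hNZ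
    omega
  intro t ht v hv heq
  set i : ℕ := (m0 % (2 * k + 1 : ℕ)).toNat with hi
  have him : (i : ℤ) = m0 % (2 * k + 1 : ℕ) :=
    Int.toNat_of_nonneg (Int.emod_nonneg m0 (by omega))
  -- (v : ℕ) ≡ m0 + t  (mod 2k+1) as integers
  have hmm : (m0 % ((2 * k + 1 : ℕ) : ℤ)) ≡ m0 [ZMOD ((2 * k + 1 : ℕ) : ℤ)] :=
    Int.emod_emod_of_dvd m0 dvd_rfl
  have hmod : ((v : ℕ) : ℤ) ≡ (m0 + t) [ZMOD ((2 * k + 1 : ℕ) : ℤ)] := by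
    have e1 : ((v : ℕ) : ℤ) = (((i + t) % (2 * k + 1) : ℕ) : ℤ) := by exact_mod_cast heq
    have e2 : (((i + t) % (2 * k + 1) : ℕ) : ℤ)
        = ((i : ℤ) + (t : ℤ)) % ((2 * k + 1 : ℕ) : ℤ) := by
      rw [Int.natCast_mod]; norm_cast
    rw [e1, e2, him]
    calc ((m0 % ((2 * k + 1 : ℕ) : ℤ) + (t : ℤ)) % ((2 * k + 1 : ℕ) : ℤ))
        ≡ m0 % ((2 * k + 1 : ℕ) : ℤ) + (t : ℤ) [ZMOD ((2 * k + 1 : ℕ) : ℤ)] :=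
          Int.emod_emod_of_dvd _ dvd_rfl
      _ ≡ m0 + (t : ℤ) [ZMOD ((2 * k + 1 : ℕ) : ℤ)] := hmm.add_right _
  obtain ⟨q, hq⟩ : ∃ q : ℤ, ((v : ℕ) : ℤ) = m0 + t + q * (2 * k + 1 : ℕ) := by
    obtain ⟨q', hq'⟩ := Int.ModEq.dvd hmod
    exact ⟨-q', by linear_combination -hq'⟩
  have hvlt : ((v : ℕ) : ℤ) < (2 * k + 1 : ℕ) := by exact_mod_cast v.isLt
  -- real version
  have hvr : ((v : ℕ) : ℝ) = (m0 : ℝ) + t + (q : ℝ) * (2 * (k : ℝ) + 1) := by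
    have := congrArg (Int.cast : ℤ → ℝ) hq
    push_cast at this
    linarith
  have hxeq : 2 * Real.pi * ((v : ℕ) : ℝ) / (2 * (k : ℝ) + 1) - θ
      = (2 * Real.pi * ((m0 : ℝ) + t) / (2 * (k : ℝ) + 1) - θ) + (q : ℝ) * (2 * Real.pi) := by
    rw [hvr]; field_simp; ring
  have hcle : Real.cos (2 * Real.pi * ((v : ℕ) : ℝ) / (2 * (k : ℝ) + 1) - θ) ≤ 0 := by
    have hq' : ((q : ℤ) : ℝ) = (q : ℝ) := rfl
    rw [hxeq, ← hq', Real.cos_add_int_mul_two_pi]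
    apply Real.cos_nonpos_of_pi_div_two_le_of_le
    · -- π/2 ≤ x
      have hAle : A ≤ (m0 : ℝ) := by rw [hm0]; exact Int.le_ceil A
      have ht0 : (0 : ℝ) ≤ (t : ℝ) := by positivity
      have e : 2 * Real.pi * A / (2 * (k : ℝ) + 1) = θ + Real.pi / 2 := by
        rw [hA]; field_simp
      have mono : 2 * Real.pi * A / (2 * (k : ℝ) + 1)
          ≤ 2 * Real.pi * ((m0 : ℝ) + t) / (2 * (k : ℝ) + 1) := by
        gcongr 2 * Real.pi * ?_ / _
        linarith
      linarith
    · -- x ≤ π + π/2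
      have hm0lt : (m0 : ℝ) < A + 1 := by rw [hm0]; exact Int.ceil_lt_add_one A
      have htk : (t : ℝ) ≤ (k : ℝ) - 1 := by
        have : (t : ℝ) + 1 ≤ (k : ℝ) := by exact_mod_cast ht
        linarith
      have mono : 2 * Real.pi * ((m0 : ℝ) + t) / (2 * (k : ℝ) + 1)
          ≤ 2 * Real.pi * (A + (k : ℝ)) / (2 * (k : ℝ) + 1) := by
        gcongr 2 * Real.pi * ?_ / _
        linarith
      have e2 : 2 * Real.pi * (A + (k : ℝ)) / (2 * (k : ℝ) + 1)
          = θ + Real.pi / 2 + 2 * Real.pi * (k : ℝ) / (2 * (k : ℝ) + 1) := by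
        rw [hA]; field_simp
      have e3 : 2 * Real.pi * (k : ℝ) / (2 * (k : ℝ) + 1) ≤ Real.pi := by
        rw [div_le_iff₀ hN0]; nlinarith
      linarith
  exact absurd (key2 v hv) (not_lt.mpr hcle)

lemma image_eq {k : ℕ} {a : ℕ → ℕ} (S : Finset (GaleFacet k a)) :
    (fun x : GaleFacet k a => gonPt k x.1) '' {x | x ∉ S} =
      gonPt k '' {v : Fin (2 * k + 1) | ∃ c : Fin (a v.val), (⟨v, c⟩ : GaleFacet k a) ∉ S} := by
  ext p
  constructor
  · rintro ⟨⟨v, c⟩, hx, rfl⟩; exact ⟨v, ⟨c, hx⟩, rfl⟩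
  · rintro ⟨v, ⟨c, hc⟩, rfl⟩; exact ⟨⟨v, c⟩, hc, rfl⟩

lemma nonface_iff {k : ℕ} {a : ℕ → ℕ} (hk : 1 ≤ k) (hpos : ∀ i < 2 * k + 1, 0 < a i)
    (S : Finset (GaleFacet k a)) :
    GaleNonface k a S ↔ ∃ i < 2 * k + 1, arcF k a i ⊆ S := by
  rw [GaleNonface, image_eq]
  constructor
  · intro h
    obtain ⟨i, hi, harc⟩ := exists_arc_of_not_mem_hull k hk _ h
    refine ⟨i, hi, ?_⟩
    rintro ⟨v, c⟩ hx
    obtain ⟨t, ht, hveq⟩ := mem_arcV.mp (mem_arcF.mp hx)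
    by_contra hnot
    exact harc t ht v ⟨c, hnot⟩ hveq
  · rintro ⟨i, hi, hsub⟩
    apply not_mem_hull k i
    rintro v ⟨c, hc⟩
    obtain ⟨s, hs, hveq⟩ := exists_arc_index k i (v : ℕ) v.isLt
    by_cases hsk : s < k
    · exact absurd (hsub (mem_arcF.mpr (mem_arcV.mpr ⟨s, hsk, hveq⟩))) hc
    · exact ⟨s, by omega, by omega, hveq⟩

lemma arcF_index_eq {k : ℕ} {a : ℕ → ℕ} (hk : 1 ≤ k) (hpos : ∀ i < 2 * k + 1, 0 < a i)
    {i i' : ℕ} (hi : i < 2 * k + 1) (hi' : i' < 2 * k + 1)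
    (h : arcF k a i ⊆ arcF k a i') : i = i' := by
  have hV : arcV k i ⊆ arcV k i' := by
    intro v hv
    have ha : 0 < a (v : ℕ) := hpos _ v.isLt
    have : (⟨v, ⟨0, ha⟩⟩ : GaleFacet k a) ∈ arcF k a i := mem_arcF.mpr hv
    exact mem_arcF.mp (h this)
  exact index_eq_of_arcV_eq hi hi' hk
    (Finset.eq_of_subset_of_card_le hV (by rw [card_arcV, card_arcV]))

lemma minNonface_iff {k : ℕ} {a : ℕ → ℕ} (hk : 1 ≤ k) (hpos : ∀ i < 2 * k + 1, 0 < a i)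
    (S : Finset (GaleFacet k a)) :
    GaleMinNonface k a S ↔ ∃ i < 2 * k + 1, S = arcF k a i := by
  constructor
  · rintro ⟨hS, hmin⟩
    obtain ⟨i, hi, hsub⟩ := (nonface_iff hk hpos S).mp hS
    refine ⟨i, hi, ?_⟩
    by_contra hne
    exact hmin (arcF k a i) (hsub.ssubset_of_ne (fun h => hne h.symm))
      ((nonface_iff hk hpos _).mpr ⟨i, hi, le_rfl⟩)
  · rintro ⟨i, hi, rfl⟩
    refine ⟨(nonface_iff hk hpos _).mpr ⟨i, hi, le_rfl⟩, ?_⟩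
    intro T hT hTnf
    obtain ⟨i', hi', hsub'⟩ := (nonface_iff hk hpos T).mp hTnf
    have heq : i' = i := arcF_index_eq hk hpos hi' hi (hsub'.trans hT.subset)
    rw [heq] at hsub'
    exact hT.not_subset hsub'

end Stmt15Aux

open Stmt15Aux

/-- For the `n`-dimensional simple polytope `P` with `n+3` facets represented on
the regular `(2k+1)`-gon with assigned positive numbers `[a_1,…,a_{2k+1}]`,
`β^{-1,2j}(P)` equals the number of indices `i` with
`a_i + a_{i+1} + ⋯ + a_{i+k-1} = j` (indices mod `2k+1`). -/
theorem stmt_15 (k n : ℕ) (hk : 2 ≤ k) (a : ℕ → ℕ)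
    (hpos : ∀ i < 2 * k + 1, 0 < a i)
    (hsum : ∑ i ∈ Finset.range (2 * k + 1), a i = n + 3) (j : ℕ) :
    galeBetti1 k a j =
      ((Finset.range (2 * k + 1)).filter
        (fun i => ∑ t ∈ Finset.range k, a ((i + t) % (2 * k + 1)) = j)).card := by
  have hk1 : 1 ≤ k := by omega
  have hset : {S : Finset (GaleFacet k a) | GaleMinNonface k a S ∧ S.card = j}
      = (fun i => arcF k a i) '' ↑((Finset.range (2 * k + 1)).filter
        (fun i => ∑ t ∈ Finset.range k, a ((i + t) % (2 * k + 1)) = j)) := by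
    ext S
    simp only [Set.mem_setOf_eq, Set.mem_image, Finset.coe_filter, Finset.mem_range]
    constructor
    · rintro ⟨hmin, hcard⟩
      obtain ⟨i, hi, rfl⟩ := (minNonface_iff hk1 hpos S).mp hmin
      exact ⟨i, ⟨hi, by rw [← card_arcF]; exact hcard⟩, rfl⟩
    · rintro ⟨i, ⟨hi, hsumj⟩, rfl⟩
      exact ⟨(minNonface_iff hk1 hpos _).mpr ⟨i, hi, rfl⟩, by rw [card_arcF]; exact hsumj⟩
  rw [galeBetti1, hset, Set.ncard_image_of_injOn, Set.ncard_coe_finset]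
  intro i hi i' hi' h
  simp only [Finset.coe_filter, Set.mem_setOf_eq, Finset.mem_range] at hi hi'
  exact arcF_index_eq hk1 hpos hi.1 hi'.1 h.le
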